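/- arXiv:1904.02291 — 3 statements merged into one kernel-verified Lean document; each statement's English description precedes it below -/
import Mathlib

section
/- Define R_n(q, x) = Σ_{i=0}^{n} C(n,i) (q + ix/n)^i (1 - q - ix/n)^{n-i} (with the convention that the i = n = 0 term is 1). Then for every non-negative integer n and all real numbers q and x, R_n(q, x) = R_n(0, x); i.e., R_n(q, x) does not depend on q. -/
open Real Finset MeasureTheory

noncomputable def klBin (q p : ℝ) : ℝ :=
  q * Real.log (q / p) + (1 - q) * Real.log ((1 - q) / (1 - p))

noncomputable def klVec {k : ℕ} (q p : Fin k → ℝ) : ℝ :=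
  ∑ i, q i * Real.log (q i / p i)

noncomputable def binomPMF (n : ℕ) (p : ℝ) (i : ℕ) : ℝ :=
  (n.choose i : ℝ) * p ^ i * (1 - p) ^ (n - i)

def multSupport (n k : ℕ) : Finset (Fin k → ℕ) :=
  (Fintype.piFinset fun _ => Finset.range (n + 1)).filter fun x => ∑ i, x i = n

noncomputable def multPMF (n : ℕ) {k : ℕ} (p : Fin k → ℝ) (x : Fin k → ℕ) : ℝ :=
  ((n.factorial : ℝ) / ∏ i, ((x i).factorial : ℝ)) * ∏ i, p i ^ x i

noncomputable def Rfun (n : ℕ) (q x : ℝ) : ℝ :=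
  ∑ i ∈ Finset.range (n + 1),
    (n.choose i : ℝ) * (q + (i : ℝ) * x / n) ^ i * (1 - q - (i : ℝ) * x / n) ^ (n - i)

noncomputable def Sfun (m : ℕ) (c q : ℝ) : ℝ :=
  ∑ j ∈ Finset.range (m + 1),
    (m.choose j : ℝ) * (q + (j : ℝ) * c) ^ j * (1 - q - (j : ℝ) * c) ^ (m - j)

lemma hasDerivAt_Sfun (m : ℕ) (c q : ℝ) :
    HasDerivAt (fun q => Sfun m c q)
      (∑ j ∈ Finset.range (m + 1),
          ((m.choose j : ℝ) * ((j : ℝ) * (q + (j : ℝ) * c) ^ (j - 1)) *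
            (1 - q - (j : ℝ) * c) ^ (m - j) -
          (m.choose j : ℝ) * (q + (j : ℝ) * c) ^ j *
            (((m - j : ℕ) : ℝ) * (1 - q - (j : ℝ) * c) ^ (m - j - 1)))) q := by
  unfold Sfun
  apply HasDerivAt.fun_sum
  intro j hj
  have h1 : HasDerivAt (fun q : ℝ => (m.choose j : ℝ) * (q + (j : ℝ) * c) ^ j)
      ((m.choose j : ℝ) * ((j : ℝ) * (q + (j : ℝ) * c) ^ (j - 1))) q := by
    have := (((hasDerivAt_id q).add_const ((j : ℝ) * c)).pow j).const_mul (m.choose j : ℝ)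
    simpa using this
  have h2 : HasDerivAt (fun q : ℝ => (1 - q - (j : ℝ) * c) ^ (m - j))
      (-(((m - j : ℕ) : ℝ) * (1 - q - (j : ℝ) * c) ^ (m - j - 1))) q := by
    have hb : HasDerivAt (fun q : ℝ => 1 - q - (j : ℝ) * c) (-1) q := by
      simpa using ((hasDerivAt_id q).const_sub 1).sub_const ((j : ℝ) * c)
    have := hb.fun_pow (m - j)
    refine this.congr_deriv ?_
    ring
  have := h1.fun_mul h2
  refine this.congr_deriv ?_
  ring

lemma Sfun_const (m : ℕ) (c : ℝ) : ∀ q q' : ℝ, Sfun m c q = Sfun m c q' := by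
  induction m with
  | zero => intro q q'; simp [Sfun]
  | succ n ih =>
    have hderiv : ∀ q : ℝ, deriv (fun q => Sfun (n + 1) c q) q = 0 := by
      intro q
      rw [(hasDerivAt_Sfun (n + 1) c q).deriv, Finset.sum_sub_distrib]
      have hA : (∑ j ∈ Finset.range (n + 2),
          ((n + 1).choose j : ℝ) * ((j : ℝ) * (q + (j : ℝ) * c) ^ (j - 1)) *
            (1 - q - (j : ℝ) * c) ^ (n + 1 - j)) = (n + 1 : ℝ) * Sfun n c (q + c) := by
        rw [Finset.sum_range_succ']
        simp only [Nat.cast_zero, zero_mul, mul_zero, add_zero]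
        rw [Sfun, Finset.mul_sum]
        apply Finset.sum_congr rfl
        intro j hj
        have hcn : (n + 1).choose (j + 1) * (j + 1) = (n + 1) * n.choose j := by
          have := (Nat.add_one_mul_choose_eq n j).symm
          simpa [Nat.succ_eq_add_one] using this
        have hc : ((n + 1).choose (j + 1) : ℝ) * ((j : ℝ) + 1) =
            ((n : ℝ) + 1) * (n.choose j : ℝ) := by exact_mod_cast hcn
        push_cast
        have e1 : q + ((j : ℝ) + 1) * c = q + c + (j : ℝ) * c := by ring
        have e2 : (1 : ℝ) - q - ((j : ℝ) + 1) * c = 1 - (q + c) - (j : ℝ) * c := by ring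
        rw [e1, e2]
        linear_combination (q + c + (j : ℝ) * c) ^ j * (1 - (q + c) - (j : ℝ) * c) ^ (n - j) * hc
      have hB : (∑ j ∈ Finset.range (n + 2),
          ((n + 1).choose j : ℝ) * (q + (j : ℝ) * c) ^ j *
            (((n + 1 - j : ℕ) : ℝ) * (1 - q - (j : ℝ) * c) ^ (n + 1 - j - 1))) =
          (n + 1 : ℝ) * Sfun n c q := by
        rw [Finset.sum_range_succ]
        simp only [Nat.sub_self, Nat.cast_zero, zero_mul, mul_zero, add_zero]
        rw [Sfun, Finset.mul_sum]
        apply Finset.sum_congr rfl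
        intro j hj
        have hcn : (n + 1).choose j * (n + 1 - j) = (n + 1) * n.choose j := by
          rw [← Nat.choose_mul_succ_eq, mul_comm]
        have hc : ((n + 1).choose j : ℝ) * ((n + 1 - j : ℕ) : ℝ) =
            ((n : ℝ) + 1) * (n.choose j : ℝ) := by exact_mod_cast hcn
        have e3 : n + 1 - j - 1 = n - j := by omega
        rw [e3]
        linear_combination (q + (j : ℝ) * c) ^ j * (1 - q - (j : ℝ) * c) ^ (n - j) * hc
      rw [hA, hB, ih (q + c) q]
      ring
    have hdiff : Differentiable ℝ (fun q => Sfun (n + 1) c q) :=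
      fun q => (hasDerivAt_Sfun (n + 1) c q).differentiableAt
    exact fun q q' => is_const_of_deriv_eq_zero hdiff hderiv q q'

theorem Rfun_const (n : ℕ) (q x : ℝ) : Rfun n q x = Rfun n 0 x := by
  have key : ∀ q' : ℝ, Rfun n q' x = Sfun n (x / n) q' := by
    intro q'
    unfold Rfun Sfun
    apply Finset.sum_congr rfl
    intro i _
    rw [mul_div_assoc]
  rw [key q, key 0, Sfun_const n (x / n) q 0]
end

section
/- For every positive integer n, every x ∈ [0,1), and every p ∈ [0,1], Σ_{i=0}^{n} P(B_{n,p} = i)^{1-x} · P(B_{n,i/n} = i)^{x} ≤ 1/(1 - x), where B_{n,q} ~ Binomial(n, q). -/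
open Real Finset MeasureTheory

section InterpAux
open Finset

private lemma fd_lemma (h : ℝ) : ∀ n : ℕ, ∀ m : ℕ, m ≤ n → ∀ a : ℝ,
    ∑ k ∈ range (n+1), (-1:ℝ)^(n-k) * (n.choose k : ℝ) * (a + k*h)^m
      = if m = n then (n.factorial : ℝ) * h^n else 0 := by
  intro n
  induction n with
  | zero =>
    intro m hm a
    interval_cases m
    simp
  | succ n ih =>
    intro m hm a
    have key : ∑ k ∈ range (n+2), (-1:ℝ)^(n+1-k) * ((n+1).choose k : ℝ) * (a + k*h)^m
        = ∑ j ∈ range (n+1), (-1:ℝ)^(n-j) * (n.choose j : ℝ)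
            * ((a + h + j*h)^m - (a + j*h)^m) := by
      rw [Finset.sum_range_succ' (fun k => (-1:ℝ)^(n+1-k) * ((n+1).choose k : ℝ) * (a + k*h)^m) (n+1)]
      have hterm : ∀ j ∈ range (n+1),
          (-1:ℝ)^(n+1-(j+1)) * ((n+1).choose (j+1) : ℝ) * (a + ((j+1 : ℕ) : ℝ)*h)^m
          = ((-1:ℝ)^(n-j) * (n.choose j : ℝ) * (a + h + j*h)^m
              + (-1:ℝ)^(n-j) * (n.choose (j+1) : ℝ) * (a + ((j+1:ℕ):ℝ)*h)^m) := by
        intro j hj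
        rw [Nat.succ_sub_succ, Nat.choose_succ_succ]
        have h2 : (a + ((j+1:ℕ):ℝ)*h) = (a + h + (j:ℝ)*h) := by push_cast; ring
        rw [h2]
        push_cast
        ring
      rw [Finset.sum_congr rfl hterm, Finset.sum_add_distrib]
      have hcancel : ∑ j ∈ range (n+1), (-1:ℝ)^(n-j) * (n.choose (j+1) : ℝ) * (a + ((j+1:ℕ):ℝ)*h)^m
            + (-1:ℝ)^(n+1-0) * ((n+1).choose 0 : ℝ) * (a + ((0:ℕ):ℝ)*h)^m
          = - ∑ j ∈ range (n+1), (-1:ℝ)^(n-j) * (n.choose j : ℝ) * (a + j*h)^m := by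
        rw [Finset.sum_range_succ' (fun j => (-1:ℝ)^(n-j) * (n.choose j : ℝ) * (a + j*h)^m) n]
        rw [Finset.sum_range_succ (fun j => (-1:ℝ)^(n-j) * (n.choose (j+1) : ℝ) * (a + ((j+1:ℕ):ℝ)*h)^m) n]
        rw [Nat.choose_succ_self]
        have hj : ∀ j ∈ range n,
            (-1:ℝ)^(n-j) * (n.choose (j+1) : ℝ) * (a + ((j+1:ℕ):ℝ)*h)^m
            = - ((-1:ℝ)^(n-(j+1)) * (n.choose (j+1) : ℝ) * (a + ((j+1:ℕ):ℝ)*h)^m) := by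
          intro j hj
          have h1 : n - j = (n - (j+1)) + 1 := by
            have := Finset.mem_range.mp hj; omega
          rw [h1, pow_succ]
          ring
        rw [Finset.sum_congr rfl hj, Finset.sum_neg_distrib]
        push_cast
        simp [pow_succ]
        ring
      have expand : ∀ j : ℕ, (-1:ℝ)^(n-j) * (n.choose j : ℝ) * ((a + h + j*h)^m - (a + j*h)^m)
          = (-1:ℝ)^(n-j) * (n.choose j : ℝ) * (a + h + j*h)^m
            - (-1:ℝ)^(n-j) * (n.choose j : ℝ) * (a + j*h)^m := fun j => by ring
      rw [add_assoc, hcancel,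
        Finset.sum_congr rfl (fun j (_ : j ∈ range (n+1)) => expand j),
        Finset.sum_sub_distrib]
      ring
    rw [key]
    have hdiff : ∀ j : ℕ, (a + h + (j:ℝ)*h)^m - (a + (j:ℝ)*h)^m
        = ∑ r ∈ range m, (a + (j:ℝ)*h)^r * h^(m-r) * (m.choose r : ℝ) := by
      intro j
      have hx := add_pow (a + (j:ℝ)*h) h m
      rw [Finset.sum_range_succ] at hx
      have h2 : (a + (j:ℝ)*h + h) = (a + h + (j:ℝ)*h) := by ring
      rw [h2] at hx
      simp only [Nat.sub_self, pow_zero, Nat.choose_self, Nat.cast_one, mul_one] at hx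
      rw [hx]
      exact add_sub_cancel_right _ _
    have step : ∑ j ∈ range (n+1), (-1:ℝ)^(n-j) * (n.choose j : ℝ) * ((a + h + (j:ℝ)*h)^m - (a + (j:ℝ)*h)^m)
        = ∑ r ∈ range m, (m.choose r : ℝ) * h^(m-r) *
            (if r = n then (n.factorial : ℝ) * h^n else 0) := by
      calc ∑ j ∈ range (n+1), (-1:ℝ)^(n-j) * (n.choose j:ℝ) * ((a + h + (j:ℝ)*h)^m - (a + (j:ℝ)*h)^m)
          = ∑ j ∈ range (n+1), ∑ r ∈ range m,
              (m.choose r : ℝ) * h^(m-r) * ((-1:ℝ)^(n-j) * (n.choose j:ℝ) * (a + (j:ℝ)*h)^r) := by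
            refine Finset.sum_congr rfl (fun j _ => ?_)
            rw [hdiff j, Finset.mul_sum]
            exact Finset.sum_congr rfl (fun r _ => by ring)
        _ = ∑ r ∈ range m, ∑ j ∈ range (n+1),
              (m.choose r:ℝ) * h^(m-r) * ((-1:ℝ)^(n-j) * (n.choose j:ℝ)*(a+(j:ℝ)*h)^r) := Finset.sum_comm
        _ = ∑ r ∈ range m, (m.choose r:ℝ) * h^(m-r) * (if r = n then (n.factorial:ℝ)*h^n else 0) := by
            refine Finset.sum_congr rfl (fun r hr => ?_)
            rw [← Finset.mul_sum]
            congr 1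
            refine ih r ?_ a
            have := Finset.mem_range.mp hr
            omega
    rw [step]
    by_cases hmn : m = n+1
    · subst hmn
      rw [if_pos rfl]
      rw [Finset.sum_eq_single_of_mem n (Finset.mem_range.mpr (by omega))
        (fun r _ hr => by rw [if_neg hr, mul_zero])]
      rw [if_pos rfl, Nat.choose_succ_self_right]
      have : n + 1 - n = 1 := by omega
      rw [this, Nat.factorial_succ]
      push_cast
      ring
    · rw [if_neg hmn]
      refine Finset.sum_eq_zero (fun r hr => ?_)
      have hrm := Finset.mem_range.mp hr
      rw [if_neg (by omega), mul_zero]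

private lemma abel_sum (h : ℝ) : ∀ (n : ℕ) (a b : ℝ),
    ∑ k ∈ range (n+1), (n.choose k : ℝ) * (a + k*h)^k * (b + ((n-k : ℕ):ℝ)*h)^(n-k)
      = ∑ s ∈ range (n+1), (n.descFactorial s : ℝ) * h^s * (a+b+(n:ℝ)*h)^(n-s) := by
  intro n
  induction n with
  | zero =>
    intro a b
    simp
  | succ n ih =>
    intro a b
    have hF : ∀ y : ℝ, HasDerivAt (fun y : ℝ => ∑ k ∈ range (n+1+1),
        ((n+1).choose k : ℝ) * (a + k*h)^k * (y + ((n+1-k : ℕ):ℝ)*h)^(n+1-k))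
        (((n:ℝ)+1) * ∑ k ∈ range (n+1), (n.choose k : ℝ) * (a + k*h)^k * ((y+h) + ((n-k:ℕ):ℝ)*h)^(n-k)) y := by
      intro y
      have hterm : ∀ k ∈ range (n+1+1), HasDerivAt (fun y : ℝ =>
          ((n+1).choose k : ℝ) * (a + k*h)^k * (y + ((n+1-k : ℕ):ℝ)*h)^(n+1-k))
          (((n+1).choose k : ℝ) * (a + k*h)^k *
            (((n+1-k:ℕ):ℝ) * (y + ((n+1-k : ℕ):ℝ)*h)^(n+1-k-1) * 1)) y := by
        intro k _
        exact (((hasDerivAt_id y).add_const (((n+1-k : ℕ):ℝ)*h)).pow (n+1-k)).const_mul _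
      have hsum := HasDerivAt.fun_sum hterm
      have veq : ∑ k ∈ range (n+1+1), ((n+1).choose k : ℝ) * (a + k*h)^k *
            (((n+1-k:ℕ):ℝ) * (y + ((n+1-k : ℕ):ℝ)*h)^(n+1-k-1) * 1)
          = ((n:ℝ)+1) * ∑ k ∈ range (n+1), (n.choose k : ℝ) * (a + k*h)^k *
              ((y+h) + ((n-k:ℕ):ℝ)*h)^(n-k) := by
        rw [Finset.sum_range_succ]
        simp only [Nat.sub_self, Nat.cast_zero, zero_mul, mul_zero, add_zero, mul_one]
        rw [Finset.mul_sum]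
        refine Finset.sum_congr rfl (fun k hk => ?_)
        have hk' : k ≤ n := Nat.lt_succ_iff.mp (Finset.mem_range.mp hk)
        have eexp : n+1-k-1 = n-k := by omega
        have e1 : ((n+1-k:ℕ):ℝ) = (n:ℝ)+1-(k:ℝ) := by
          rw [Nat.cast_sub (by omega)]; push_cast; ring
        have e2 : ((n-k:ℕ):ℝ) = (n:ℝ)-(k:ℝ) := by rw [Nat.cast_sub hk']
        have c2n : (n+1-k) * ((n+1).choose k) = (n+1) * n.choose k := by
          rw [mul_comm, ← Nat.choose_mul_succ_eq, mul_comm]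
        have c2r : ((n:ℝ)+1-(k:ℝ)) * (((n+1).choose k):ℝ) = ((n:ℝ)+1) * ((n.choose k):ℝ) := by
          have hc := congrArg (Nat.cast (R := ℝ)) c2n
          push_cast at hc
          rw [← e1]
          rw [Nat.cast_sub (by omega : k ≤ n+1)] at hc ⊢
          push_cast at hc ⊢
          linarith
        rw [eexp, e1, e2]
        have hbase : (y + ((n:ℝ)+1-(k:ℝ))*h) = ((y+h) + ((n:ℝ)-(k:ℝ))*h) := by ring
        rw [hbase]
        linear_combination ((a + (k:ℝ)*h)^k * ((y+h) + ((n:ℝ)-(k:ℝ))*h)^(n-k)) * c2r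
      rw [veq] at hsum
      exact hsum
    have hG : ∀ y : ℝ, HasDerivAt (fun y : ℝ => ∑ s ∈ range (n+1+1),
        ((n+1).descFactorial s : ℝ) * h^s * (a + y + ((n+1:ℕ):ℝ)*h)^(n+1-s))
        (((n:ℝ)+1) * ∑ s ∈ range (n+1), (n.descFactorial s : ℝ) * h^s * (a+(y+h)+(n:ℝ)*h)^(n-s)) y := by
      intro y
      have hterm : ∀ s ∈ range (n+1+1), HasDerivAt (fun y : ℝ =>
          ((n+1).descFactorial s : ℝ) * h^s * (a + y + ((n+1:ℕ):ℝ)*h)^(n+1-s))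
          (((n+1).descFactorial s : ℝ) * h^s *
            (((n+1-s:ℕ):ℝ) * (a + y + ((n+1:ℕ):ℝ)*h)^(n+1-s-1) * 1)) y := by
        intro s _
        exact ((((hasDerivAt_id y).const_add a).add_const (((n+1:ℕ):ℝ)*h)).pow (n+1-s)).const_mul _
      have hsum := HasDerivAt.fun_sum hterm
      have veq : ∑ s ∈ range (n+1+1), ((n+1).descFactorial s : ℝ) * h^s *
            (((n+1-s:ℕ):ℝ) * (a + y + ((n+1:ℕ):ℝ)*h)^(n+1-s-1) * 1)
          = ((n:ℝ)+1) * ∑ s ∈ range (n+1), (n.descFactorial s : ℝ) * h^s * (a+(y+h)+(n:ℝ)*h)^(n-s) := by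
        rw [Finset.sum_range_succ]
        simp only [Nat.sub_self, Nat.cast_zero, zero_mul, mul_zero, add_zero, mul_one]
        rw [Finset.mul_sum]
        refine Finset.sum_congr rfl (fun s hs => ?_)
        have hs' : s ≤ n := Nat.lt_succ_iff.mp (Finset.mem_range.mp hs)
        have eexp : n+1-s-1 = n-s := by omega
        have c2n : (n+1-s) * ((n+1).descFactorial s) = (n+1) * n.descFactorial s := by
          rw [← Nat.descFactorial_succ, Nat.succ_descFactorial_succ]
        have e1 : ((n+1-s:ℕ):ℝ) = (n:ℝ)+1-(s:ℝ) := by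
          rw [Nat.cast_sub (by omega)]; push_cast; ring
        have c2r : ((n:ℝ)+1-(s:ℝ)) * (((n+1).descFactorial s):ℝ) = ((n:ℝ)+1) * ((n.descFactorial s):ℝ) := by
          have hc := congrArg (Nat.cast (R := ℝ)) c2n
          rw [Nat.cast_mul, Nat.cast_mul, Nat.cast_sub (by omega : s ≤ n+1)] at hc
          push_cast at hc ⊢
          linarith
        have hbase : (a + y + ((n+1:ℕ):ℝ)*h) = (a+(y+h)+(n:ℝ)*h) := by push_cast; ring
        rw [eexp, e1, hbase]
        linear_combination (h^s * (a+(y+h)+(n:ℝ)*h)^(n-s)) * c2r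
      rw [veq] at hsum
      exact hsum
    -- φ has derivative 0
    have hphi : ∀ y : ℝ, HasDerivAt (fun y : ℝ =>
        (∑ k ∈ range (n+1+1), ((n+1).choose k : ℝ) * (a + k*h)^k * (y + ((n+1-k : ℕ):ℝ)*h)^(n+1-k))
        - ∑ s ∈ range (n+1+1), ((n+1).descFactorial s : ℝ) * h^s * (a + y + ((n+1:ℕ):ℝ)*h)^(n+1-s)) 0 y := by
      intro y
      have h0 := (hF y).fun_sub (hG y)
      rw [ih a (y+h)] at h0
      simpa using h0
    have hconst := is_const_of_deriv_eq_zero (f := fun y : ℝ =>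
        (∑ k ∈ range (n+1+1), ((n+1).choose k : ℝ) * (a + k*h)^k * (y + ((n+1-k : ℕ):ℝ)*h)^(n+1-k))
        - ∑ s ∈ range (n+1+1), ((n+1).descFactorial s : ℝ) * h^s * (a + y + ((n+1:ℕ):ℝ)*h)^(n+1-s))
      (fun y => (hphi y).differentiableAt) (fun y => (hphi y).deriv) b (-(a+((n:ℝ)+1)*h))
    -- evaluate at b0
    have hFb0 : ∑ k ∈ range (n+1+1), ((n+1).choose k : ℝ) * (a + k*h)^k *
          ((-(a+((n:ℝ)+1)*h)) + ((n+1-k : ℕ):ℝ)*h)^(n+1-k)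
        = ((n+1).factorial : ℝ) * h^(n+1) := by
      have step : ∀ k ∈ range (n+1+1), ((n+1).choose k : ℝ) * (a + k*h)^k *
            ((-(a+((n:ℝ)+1)*h)) + ((n+1-k : ℕ):ℝ)*h)^(n+1-k)
          = (-1:ℝ)^(n+1-k) * (((n+1).choose k : ℕ):ℝ) * (a + k*h)^(n+1) := by
        intro k hk
        have hk' : k ≤ n+1 := Nat.lt_succ_iff.mp (Finset.mem_range.mp hk)
        have hbase : ((-(a+((n:ℝ)+1)*h)) + ((n+1-k : ℕ):ℝ)*h) = -(a + (k:ℝ)*h) := by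
          rw [Nat.cast_sub hk']; push_cast; ring
        rw [hbase, neg_pow]
        have : (a + (k:ℝ)*h)^k * ((a + (k:ℝ)*h)^(n+1-k)) = (a + (k:ℝ)*h)^(n+1) := by
          rw [← pow_add]; congr 1; omega
        calc ((n+1).choose k : ℝ) * (a + k*h)^k * ((-1:ℝ)^(n+1-k) * (a + (k:ℝ)*h)^(n+1-k))
            = (-1:ℝ)^(n+1-k) * ((n+1).choose k : ℝ) * ((a + (k:ℝ)*h)^k * (a + (k:ℝ)*h)^(n+1-k)) := by ring
          _ = (-1:ℝ)^(n+1-k) * (((n+1).choose k : ℕ):ℝ) * (a + k*h)^(n+1) := by rw [this]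
      rw [Finset.sum_congr rfl step]
      have := fd_lemma h (n+1) (n+1) le_rfl a
      rw [if_pos rfl] at this
      exact this
    have hGb0 : ∑ s ∈ range (n+1+1), ((n+1).descFactorial s : ℝ) * h^s *
          (a + (-(a+((n:ℝ)+1)*h)) + ((n+1:ℕ):ℝ)*h)^(n+1-s)
        = ((n+1).factorial : ℝ) * h^(n+1) := by
      have hz : (a + (-(a+((n:ℝ)+1)*h)) + ((n+1:ℕ):ℝ)*h) = 0 := by push_cast; ring
      rw [Finset.sum_congr rfl (fun s _ => by rw [hz])]
      rw [Finset.sum_range_succ]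
      rw [Finset.sum_eq_zero (fun s hs => by
        rw [zero_pow (by have := Finset.mem_range.mp hs; omega : n+1-s ≠ 0), mul_zero])]
      rw [Nat.sub_self, pow_zero, Nat.descFactorial_self, zero_add, mul_one]
    rw [hFb0, hGb0, sub_self] at hconst
    linarith [hconst]

private lemma pow_rpow_comm (p : ℝ) (hp : 0 ≤ p) (i : ℕ) (y : ℝ) :
    (p ^ i) ^ y = (p ^ y) ^ i := by
  rw [← Real.rpow_natCast p i, ← Real.rpow_mul hp, mul_comm ((i:ℝ)) y, Real.rpow_mul hp,
    Real.rpow_natCast]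

private lemma binom_rpow (n i : ℕ) (hi : i ≤ n) (r y : ℝ) (hr : 0 ≤ r) (hr1 : r ≤ 1) :
    binomPMF n r i ^ y = (n.choose i : ℝ)^y * (r^y)^i * ((1-r)^y)^(n-i) := by
  unfold binomPMF
  have h1r : (0:ℝ) ≤ 1 - r := by linarith
  rw [Real.mul_rpow (mul_nonneg (by positivity) (pow_nonneg hr i)) (pow_nonneg h1r (n-i)),
    Real.mul_rpow (by positivity) (pow_nonneg hr i),
    pow_rpow_comm r hr, pow_rpow_comm (1-r) h1r]

end InterpAux

theorem binomial_interp_sum_le (n : ℕ) (hn : 1 ≤ n) (x : ℝ) (hx0 : 0 ≤ x) (hx1 : x < 1)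
    (p : ℝ) (hp0 : 0 ≤ p) (hp1 : p ≤ 1) :
    ∑ i ∈ Finset.range (n + 1),
        binomPMF n p i ^ (1 - x) * binomPMF n ((i : ℝ) / n) i ^ x ≤
      1 / (1 - x) := by
  have hn0 : (0:ℝ) < (n:ℝ) := by exact_mod_cast hn
  have h1x : (0:ℝ) < 1 - x := by linarith
  have hx1' : (0:ℝ) ≤ 1 - x := le_of_lt h1x
  have hterm : ∀ i ∈ Finset.range (n+1),
      binomPMF n p i ^ (1-x) * binomPMF n ((i:ℝ)/n) i ^ x
      ≤ (n.choose i : ℝ) * ((1-x)*p + (i:ℝ)*(x/(n:ℝ)))^i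
          * ((1-x)*(1-p) + ((n-i:ℕ):ℝ)*(x/(n:ℝ)))^(n-i) := by
    intro i hi
    have hi' : i ≤ n := Nat.lt_succ_iff.mp (Finset.mem_range.mp hi)
    have hq0 : (0:ℝ) ≤ (i:ℝ)/n := by positivity
    have hq1 : (i:ℝ)/n ≤ 1 := by
      rw [div_le_one hn0]; exact_mod_cast hi'
    have hC : (0:ℝ) < (n.choose i : ℝ) := by exact_mod_cast Nat.choose_pos hi'
    rw [binom_rpow n i hi' p (1-x) hp0 hp1, binom_rpow n i hi' ((i:ℝ)/n) x hq0 hq1]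
    have e3 : ((n.choose i : ℝ)^(1-x) * (p^(1-x))^i * (((1-p))^(1-x))^(n-i))
        * ((n.choose i : ℝ)^x * (((i:ℝ)/n)^x)^i * ((1-(i:ℝ)/n)^x)^(n-i))
        = (n.choose i : ℝ) * (p^(1-x) * ((i:ℝ)/n)^x)^i
            * ((1-p)^(1-x) * (1-(i:ℝ)/n)^x)^(n-i) := by
      calc ((n.choose i : ℝ)^(1-x) * (p^(1-x))^i * (((1-p))^(1-x))^(n-i))
          * ((n.choose i : ℝ)^x * (((i:ℝ)/n)^x)^i * ((1-(i:ℝ)/n)^x)^(n-i))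
          = ((n.choose i : ℝ)^(1-x) * (n.choose i : ℝ)^x)
            * ((p^(1-x))^i * (((i:ℝ)/n)^x)^i)
            * ((((1-p))^(1-x))^(n-i) * ((1-(i:ℝ)/n)^x)^(n-i)) := by ring
        _ = _ := by
            rw [← Real.rpow_add hC, (by ring : (1-x)+x = (1:ℝ)), Real.rpow_one,
              ← mul_pow, ← mul_pow]
    rw [e3]
    have g1 : p^(1-x) * ((i:ℝ)/n)^x ≤ (1-x)*p + (i:ℝ)*(x/(n:ℝ)) := by
      have := Real.geom_mean_le_arith_mean2_weighted hx1' hx0 hp0 hq0 (by ring)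
      calc p^(1-x) * ((i:ℝ)/n)^x ≤ (1-x)*p + x*((i:ℝ)/n) := this
        _ = (1-x)*p + (i:ℝ)*(x/(n:ℝ)) := by ring
    have g2 : (1-p)^(1-x) * (1-(i:ℝ)/n)^x
        ≤ (1-x)*(1-p) + ((n-i:ℕ):ℝ)*(x/(n:ℝ)) := by
      have h2 := Real.geom_mean_le_arith_mean2_weighted hx1' hx0
        (by linarith : (0:ℝ) ≤ 1-p) (by linarith : (0:ℝ) ≤ 1-(i:ℝ)/n) (by ring)
      have hcast : ((n-i:ℕ):ℝ) = (n:ℝ) - (i:ℝ) := by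
        rw [Nat.cast_sub hi']
      calc (1-p)^(1-x) * (1-(i:ℝ)/n)^x ≤ (1-x)*(1-p) + x*(1-(i:ℝ)/n) := h2
        _ = (1-x)*(1-p) + ((n-i:ℕ):ℝ)*(x/(n:ℝ)) := by
            rw [hcast]; field_simp
    have hg1l : (0:ℝ) ≤ p^(1-x) * ((i:ℝ)/n)^x := by positivity
    have hg2l : (0:ℝ) ≤ (1-p)^(1-x) * (1-(i:ℝ)/n)^x := by
      have : (0:ℝ) ≤ 1-p := by linarith
      have : (0:ℝ) ≤ 1-(i:ℝ)/n := by linarith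
      positivity
    have hA := pow_le_pow_left₀ hg1l g1 i
    have hB := pow_le_pow_left₀ hg2l g2 (n-i)
    have hA' : (0:ℝ) ≤ (1-x)*p + (i:ℝ)*(x/(n:ℝ)) := le_trans hg1l g1
    exact mul_le_mul (mul_le_mul_of_nonneg_left hA hC.le) hB (pow_nonneg hg2l _)
      (mul_nonneg hC.le (pow_nonneg hA' i))
  calc ∑ i ∈ Finset.range (n+1), binomPMF n p i ^ (1-x) * binomPMF n ((i:ℝ)/n) i ^ x
      ≤ ∑ i ∈ Finset.range (n+1), (n.choose i : ℝ) * ((1-x)*p + (i:ℝ)*(x/(n:ℝ)))^i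
          * ((1-x)*(1-p) + ((n-i:ℕ):ℝ)*(x/(n:ℝ)))^(n-i) := Finset.sum_le_sum hterm
    _ = ∑ s ∈ Finset.range (n+1), (n.descFactorial s : ℝ) * (x/(n:ℝ))^s
          * ((1-x)*p + (1-x)*(1-p) + (n:ℝ)*(x/(n:ℝ)))^(n-s) := abel_sum (x/(n:ℝ)) n ((1-x)*p) ((1-x)*(1-p))
    _ = ∑ s ∈ Finset.range (n+1), (n.descFactorial s : ℝ) * (x/(n:ℝ))^s := by
        have hone : (1-x)*p + (1-x)*(1-p) + (n:ℝ)*(x/(n:ℝ)) = 1 := by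
          field_simp
          ring
        rw [hone]
        simp
    _ ≤ ∑ s ∈ Finset.range (n+1), x^s := by
        refine Finset.sum_le_sum (fun s _ => ?_)
        have hd : ((n.descFactorial s : ℕ):ℝ) ≤ (n:ℝ)^s := by
          exact_mod_cast Nat.descFactorial_le_pow n s
        rw [div_pow]
        calc (n.descFactorial s : ℝ) * (x^s/(n:ℝ)^s)
            = ((n.descFactorial s : ℝ)/(n:ℝ)^s) * x^s := by ring
          _ ≤ 1 * x^s := mul_le_mul_of_nonneg_right
              ((div_le_one (by positivity)).mpr hd) (pow_nonneg hx0 s)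
          _ = x^s := one_mul _
    _ ≤ 1 / (1-x) := by
        rw [le_div_iff₀ h1x]
        have := geom_sum_mul x (n+1)
        have hexp : (∑ s ∈ Finset.range (n+1), x^s) * (1-x) = 1 - x^(n+1) := by
          have h2 : (∑ s ∈ Finset.range (n+1), x^s) * (x-1) = x^(n+1) - 1 := geom_sum_mul x (n+1)
          linarith [h2]
        have : (0:ℝ) ≤ x^(n+1) := by positivity
        linarith [hexp]
end

section
/- Suppose f : [0,1) → ℝ satisfies: for every positive integer m, every t ∈ [0, m), and every p ∈ [0,1], E[exp(t · KL((B/m, 1 - B/m) ‖ (p, 1-p)))] ≤ f(t/m) where B ~ Binomial(m, p). Then for every k ≥ 2, every positive integer n, every probability vector P on k letters, and every t ∈ [0, n), E[exp(t · KL((X_1/n, ..., X_k/n) ‖ P))] ≤ f(t/n)^{k-1}, where (X_1, ..., X_k) ~ Multinomial(n, P). -/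
open Real Finset MeasureTheory

lemma mem_multSupport {n k : ℕ} {x : Fin k → ℕ} :
    x ∈ multSupport n k ↔ ∑ i, x i = n := by
  simp only [multSupport, Finset.mem_filter, Fintype.mem_piFinset, Finset.mem_range]
  constructor
  · exact fun h => h.2
  · intro h
    refine ⟨fun i => ?_, h⟩
    have : x i ≤ ∑ j, x j := Finset.single_le_sum (fun j _ => Nat.zero_le _) (Finset.mem_univ i)
    omega

lemma sum_binomPMF (n : ℕ) (p : ℝ) : ∑ i ∈ Finset.range (n+1), binomPMF n p i = 1 := by
  have h := add_pow p (1 - p) n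
  simp only [add_sub_cancel, one_pow] at h
  rw [show (1:ℝ) = (p + (1-p))^n by rw [add_sub_cancel, one_pow], add_pow]
  refine Finset.sum_congr rfl fun i _ => ?_
  unfold binomPMF; ring

lemma binomPMF_nonneg {n : ℕ} {p : ℝ} (h0 : 0 ≤ p) (h1 : p ≤ 1) (i : ℕ) :
    0 ≤ binomPMF n p i := by
  unfold binomPMF
  have : (0:ℝ) ≤ 1 - p := by linarith
  positivity

lemma multPMF_nonneg {n k : ℕ} {p : Fin k → ℝ} (hp : ∀ i, 0 ≤ p i) (x : Fin k → ℕ) :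
    0 ≤ multPMF n p x := by
  unfold multPMF
  apply mul_nonneg
  · positivity
  · exact Finset.prod_nonneg fun i _ => pow_nonneg (hp i) _

lemma klBin_half_nonneg {q : ℝ} (h0 : 0 ≤ q) (h1 : q ≤ 1) : 0 ≤ klBin q (1/2) := by
  have key : ∀ a : ℝ, 0 ≤ a → a - 1/2 ≤ a * Real.log (a / (1/2)) := by
    intro a ha
    rcases eq_or_lt_of_le ha with h | h
    · rw [← h]; norm_num
    · have h2a : (0:ℝ) < 2 * a := by linarith
      have hl := Real.log_le_sub_one_of_pos (show (0:ℝ) < (2*a)⁻¹ by positivity)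
      rw [Real.log_inv] at hl
      have hlog : Real.log (a / (1/2)) = Real.log (2*a) := by ring_nf
      rw [hlog]
      have h3 : 1 - (2*a)⁻¹ ≤ Real.log (2*a) := by linarith
      have h4 : a * (1 - (2*a)⁻¹) ≤ a * Real.log (2*a) :=
        mul_le_mul_of_nonneg_left h3 ha
      have h5 : a * (1 - (2*a)⁻¹) = a - 1/2 := by
        field_simp
      linarith
  have k1 := key q h0
  have k2 := key (1 - q) (by linarith)
  have e : (1:ℝ) - 1/2 = 1/2 := by norm_num
  rw [klBin, e]
  linarith

lemma multPMF_factor {K : ℕ} (n m : ℕ) (hm : m ≤ n) (p : Fin (K+2) → ℝ)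
    (hq : p (Fin.last (K+1)) ≠ 1) (y : Fin (K+1) → ℕ) (hy : ∑ i, y i = n - m) :
    multPMF n p (Fin.snoc y m) =
      binomPMF n (p (Fin.last (K+1))) m *
        multPMF (n - m) (fun i => p i.castSucc / (1 - p (Fin.last (K+1)))) y := by
  set q := p (Fin.last (K+1)) with hqdef
  have h1q : (1:ℝ) - q ≠ 0 := sub_ne_zero.mpr (Ne.symm hq)
  unfold multPMF binomPMF
  have hfacprod : ∏ i : Fin (K+2), (((Fin.snoc y m : Fin (K+2) → ℕ) i).factorial : ℝ)
      = (∏ i : Fin (K+1), ((y i).factorial : ℝ)) * (m.factorial : ℝ) := by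
    rw [Fin.prod_univ_castSucc]
    simp
  have hpprod : ∏ i : Fin (K+2), p i ^ ((Fin.snoc y m : Fin (K+2) → ℕ) i)
      = (∏ i : Fin (K+1), p i.castSucc ^ y i) * q ^ m := by
    rw [Fin.prod_univ_castSucc]
    simp
    exact Or.inl rfl
  have hprod : ∏ i : Fin (K+1), (p i.castSucc / (1 - q)) ^ y i
      = (∏ i, p i.castSucc ^ y i) / (1-q)^(n-m) := by
    rw [← hy, ← Finset.prod_pow_eq_pow_sum]
    rw [← Finset.prod_div_distrib]
    exact Finset.prod_congr rfl fun i _ => div_pow _ _ _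
  rw [hfacprod, hpprod, hprod]
  have hfac : ((n.choose m : ℕ) : ℝ) * (m.factorial : ℝ) * ((n-m).factorial : ℝ)
      = (n.factorial : ℝ) := by
    exact_mod_cast congrArg (Nat.cast (R := ℝ)) (Nat.choose_mul_factorial_mul_factorial hm)
  have hmf : (m.factorial : ℝ) ≠ 0 := Nat.cast_ne_zero.mpr m.factorial_ne_zero
  have hnmf : ((n-m).factorial : ℝ) ≠ 0 := Nat.cast_ne_zero.mpr (n-m).factorial_ne_zero
  have hyf : (∏ i, ((y i).factorial : ℝ)) ≠ 0 :=
    Finset.prod_ne_zero_iff.mpr fun i _ => Nat.cast_ne_zero.mpr (y i).factorial_ne_zero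
  have hpow : ((1:ℝ)-q)^(n-m) ≠ 0 := pow_ne_zero _ h1q
  rw [← hfac]
  field_simp

lemma kl_decomp {K : ℕ} (n m : ℕ) (hm : m ≤ n) (hn : 0 < n) (p : Fin (K+2) → ℝ)
    (hp : ∀ i, 0 ≤ p i) (hq1 : p (Fin.last (K+1)) < 1) (y : Fin (K+1) → ℕ)
    (hy : ∑ i, y i = n - m)
    (hgood : ∀ i : Fin (K+1), p i.castSucc = 0 → y i = 0) :
    klVec (fun i => (((Fin.snoc y m : Fin (K+2) → ℕ) i : ℕ) : ℝ) / n) p =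
      klBin ((m:ℝ)/n) (p (Fin.last (K+1))) +
      (((n - m : ℕ) : ℝ)/n) *
        klVec (fun i => (y i : ℝ) / ((n - m : ℕ) : ℝ))
          (fun i => p i.castSucc / (1 - p (Fin.last (K+1)))) := by
  set q := p (Fin.last (K+1)) with hqdef
  have h1q : (0:ℝ) < 1 - q := by linarith
  have hN : (0:ℝ) < (n:ℝ) := by exact_mod_cast hn
  set R : ℝ := ((n - m : ℕ) : ℝ) with hRdef
  have hRcast : R = (n:ℝ) - (m:ℝ) := by rw [hRdef, Nat.cast_sub hm]
  have hR0 : 0 ≤ R := by positivity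
  unfold klVec klBin
  rw [Fin.sum_univ_castSucc]
  simp only [Fin.snoc_castSucc, Fin.snoc_last]
  have h1mn : 1 - (m:ℝ)/n = R/n := by rw [hRcast]; field_simp
  rw [h1mn]
  rcases eq_or_lt_of_le hR0 with hR | hR
  · -- R = 0, so all y i = 0
    have hy0 : ∀ i, y i = 0 := by
      intro i
      have : n - m = 0 := by
        have : ((n - m : ℕ) : ℝ) = 0 := hR.symm
        exact_mod_cast this
      have hle : y i ≤ ∑ j, y j := Finset.single_le_sum (fun j _ => Nat.zero_le _) (Finset.mem_univ i)
      omega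
    simp [hy0, ← hR]
    exact Or.inl rfl
  · -- R > 0
    have key : ∀ i : Fin (K+1),
        (y i : ℝ)/n * Real.log (((y i : ℝ)/n) / p i.castSucc)
        = (y i : ℝ)/n * Real.log ((R/n)/(1-q))
          + R/n * ((y i : ℝ)/R * Real.log (((y i : ℝ)/R) / (p i.castSucc/(1-q)))) := by
      intro i
      rcases Nat.eq_zero_or_pos (y i) with h0 | hpos
      · simp [h0]
      · have hyi : (0:ℝ) < (y i : ℝ) := by exact_mod_cast hpos
        have hpi : 0 < p i.castSucc := by
          rcases eq_or_lt_of_le (hp i.castSucc) with h | h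
          · exact absurd (hgood i h.symm) (by omega)
          · exact h
        have ha : (0:ℝ) < (R/n)/(1-q) := by positivity
        have hb : (0:ℝ) < ((y i : ℝ)/R) / (p i.castSucc/(1-q)) := by positivity
        have harg : ((y i : ℝ)/n) / p i.castSucc
            = ((R/n)/(1-q)) * (((y i : ℝ)/R) / (p i.castSucc/(1-q))) := by
          field_simp
        rw [harg, Real.log_mul (ne_of_gt ha) (ne_of_gt hb)]
        field_simp
    rw [Finset.sum_congr rfl (fun i _ => key i), Finset.sum_add_distrib]
    have hsy : ∑ i, (y i : ℝ) = R := by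
      rw [hRdef, ← hy]
      push_cast
      rfl
    have h1 : ∑ i : Fin (K+1), (y i : ℝ)/n * Real.log ((R/n)/(1-q))
        = R/n * Real.log ((R/n)/(1-q)) := by
      rw [← Finset.sum_mul, ← Finset.sum_div, hsy]
    have h2 : ∑ i : Fin (K+1), R/n * ((y i : ℝ)/R * Real.log (((y i : ℝ)/R) / (p i.castSucc/(1-q))))
        = R/n * ∑ i : Fin (K+1), (y i : ℝ)/R * Real.log (((y i : ℝ)/R) / (p i.castSucc/(1-q))) := by
      rw [Finset.mul_sum]
    rw [h1, h2]
    ring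

lemma sum_multSupport_succ {K n : ℕ} (g : (Fin (K+2) → ℕ) → ℝ) :
    ∑ x ∈ multSupport n (K+2), g x
    = ∑ m ∈ Finset.range (n+1), ∑ y ∈ multSupport (n-m) (K+1), g (Fin.snoc y m) := by
  conv_rhs => rw [Finset.sum_sigma']
  refine Finset.sum_nbij'
    (i := fun x => (⟨x (Fin.last (K+1)), Fin.init x⟩ : Σ _ : ℕ, Fin (K+1) → ℕ))
    (j := fun a => Fin.snoc a.2 a.1) ?_ ?_ ?_ ?_ ?_
  · intro x hx
    rw [mem_multSupport] at hx
    have hsum : (∑ i : Fin (K+1), x i.castSucc) + x (Fin.last (K+1)) = n := by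
      rw [← Fin.sum_univ_castSucc]; exact hx
    rw [Finset.mem_sigma, Finset.mem_range, mem_multSupport]
    dsimp only
    refine ⟨by omega, ?_⟩
    have he : (∑ i : Fin (K+1), Fin.init x i) = ∑ i : Fin (K+1), x i.castSucc :=
      Finset.sum_congr rfl fun i _ => rfl
    omega
  · intro a ha
    rw [Finset.mem_sigma, Finset.mem_range, mem_multSupport] at ha
    rw [mem_multSupport]
    rw [Fin.sum_univ_castSucc]
    simp only [Fin.snoc_castSucc, Fin.snoc_last]
    rw [ha.2]
    omega
  · intro x hx
    exact Fin.snoc_init_self x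
  · intro a ha
    simp only [Fin.snoc_last, Fin.init_snoc]
  · intro x hx
    rw [Fin.snoc_init_self x]

lemma multSupport_zero (k : ℕ) : multSupport 0 k = {fun _ => 0} := by
  ext x
  rw [mem_multSupport, Finset.mem_singleton]
  constructor
  · intro h
    funext i
    have : x i ≤ ∑ j, x j := Finset.single_le_sum (fun j _ => Nat.zero_le _) (Finset.mem_univ i)
    omega
  · intro h; subst h; simp

lemma multSupport_one (n : ℕ) : multSupport n 1 = {fun _ => n} := by
  ext x
  rw [mem_multSupport, Finset.mem_singleton, Fin.sum_univ_one]
  constructor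
  · intro h
    funext i
    have : i = 0 := Subsingleton.elim i 0
    rw [this, h]
  · intro h; rw [h]

lemma aux_mgf (f : ℝ → ℝ)
    (hf : ∀ m : ℕ, 1 ≤ m → ∀ t : ℝ, 0 ≤ t → t < m → ∀ p : ℝ, 0 ≤ p → p ≤ 1 →
      ∑ i ∈ Finset.range (m + 1), binomPMF m p i *
        Real.exp (t * klBin ((i : ℝ) / m) p) ≤ f (t / m)) :
    ∀ K : ℕ, ∀ n : ℕ, ∀ p : Fin (K+1) → ℝ, (∀ i, 0 ≤ p i) → (∑ i, p i = 1) →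
      ∀ t : ℝ, 0 ≤ t → t < n →
      ∑ x ∈ multSupport n (K+1), multPMF n p x *
        Real.exp (t * klVec (fun i => (x i : ℝ) / n) p) ≤ f (t / n) ^ K := by
  have f_ge_one : ∀ n : ℕ, ∀ t : ℝ, 0 ≤ t → t < n → 1 ≤ f (t/n) := by
    intro n t ht0 htn
    have hnR : (0:ℝ) < n := lt_of_le_of_lt ht0 htn
    have hn : 1 ≤ n := by exact_mod_cast Nat.one_le_cast.mpr (by exact_mod_cast hnR)
    have h := hf n hn t ht0 htn (1/2) (by norm_num) (by norm_num)
    calc (1:ℝ) = ∑ i ∈ Finset.range (n+1), binomPMF n (1/2) i := (sum_binomPMF n (1/2)).symm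
      _ ≤ ∑ i ∈ Finset.range (n+1), binomPMF n (1/2) i *
            Real.exp (t * klBin ((i:ℝ)/n) (1/2)) := by
          refine Finset.sum_le_sum fun i hi => ?_
          rw [Finset.mem_range] at hi
          have hi0 : (0:ℝ) ≤ (i:ℝ)/n := by positivity
          have hi1 : (i:ℝ)/n ≤ 1 := by
            rw [div_le_one hnR]
            exact_mod_cast Nat.lt_succ_iff.mp hi
          exact le_mul_of_one_le_right (binomPMF_nonneg (by norm_num) (by norm_num) i)
            (Real.one_le_exp (mul_nonneg ht0 (klBin_half_nonneg hi0 hi1)))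
      _ ≤ f (t/n) := h
  intro K
  induction K with
  | zero =>
    intro n p hp hp1 t ht0 htn
    have hnR : (0:ℝ) < n := lt_of_le_of_lt ht0 htn
    rw [multSupport_one, Finset.sum_singleton]
    have hp0 : p 0 = 1 := by rw [← hp1, Fin.sum_univ_one]
    have h1 : multPMF n p (fun _ => n) = 1 := by
      unfold multPMF
      rw [Fin.prod_univ_one, Fin.prod_univ_one, hp0, one_pow,
        div_self (Nat.cast_ne_zero.mpr n.factorial_ne_zero), mul_one]
    have h2 : klVec (fun _ : Fin 1 => ((n:ℕ):ℝ)/n) p = 0 := by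
      unfold klVec
      rw [Fin.sum_univ_one, hp0, div_self (ne_of_gt hnR)]
      simp
    rw [h1, h2]
    simp
  | succ K ih =>
    intro n p hp hp1 t ht0 htn
    have hnR : (0:ℝ) < n := lt_of_le_of_lt ht0 htn
    have hn1 : 1 ≤ n := by exact_mod_cast Nat.one_le_cast.mpr (by exact_mod_cast hnR)
    set q := p (Fin.last (K+1)) with hqdef
    have hq0 : 0 ≤ q := hp _
    have hq1 : q ≤ 1 := by
      rw [← hp1]
      exact Finset.single_le_sum (fun i _ => hp i) (Finset.mem_univ _)
    have hfone : 1 ≤ f (t/n) := f_ge_one n t ht0 htn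
    have hsumcs : (∑ i : Fin (K+1), p i.castSucc) + q = 1 := by
      rw [← Fin.sum_univ_castSucc]; exact hp1
    rcases eq_or_lt_of_le hq1 with hq | hq
    · -- q = 1
      have hrest : ∀ i : Fin (K+1), p i.castSucc = 0 := by
        have h0 : ∑ i : Fin (K+1), p i.castSucc = 0 := by linarith
        exact fun i => (Finset.sum_eq_zero_iff_of_nonneg
          (fun j _ => hp j.castSucc)).mp h0 i (Finset.mem_univ i)
      set x0 : Fin (K+2) → ℕ := Fin.snoc (fun _ => 0) n with hx0def
      have hx0mem : x0 ∈ multSupport n (K+2) := by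
        rw [mem_multSupport, Fin.sum_univ_castSucc]
        simp [hx0def]
      have hterm : multPMF n p x0 * Real.exp (t * klVec (fun i => (x0 i : ℝ)/n) p) = 1 := by
        have hm : multPMF n p x0 = 1 := by
          unfold multPMF
          have e1 : ∏ i : Fin (K+2), ((x0 i).factorial : ℝ) = (n.factorial : ℝ) := by
            rw [Fin.prod_univ_castSucc]
            simp [hx0def]
          have e2 : ∏ i : Fin (K+2), p i ^ x0 i = 1 := by
            rw [Fin.prod_univ_castSucc]
            simp [hx0def, ← hqdef, hq]
          rw [e1, e2, div_self (Nat.cast_ne_zero.mpr n.factorial_ne_zero), mul_one]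
        have hkl : klVec (fun i => (x0 i : ℝ)/n) p = 0 := by
          unfold klVec
          rw [Fin.sum_univ_castSucc]
          have : ((x0 (Fin.last (K+1)) : ℕ) : ℝ) = (n:ℝ) := by simp [hx0def]
          simp [hx0def, ← hqdef, hq, div_self (ne_of_gt hnR)]
        rw [hm, hkl, mul_zero, Real.exp_zero, mul_one]
      rw [Finset.sum_eq_single_of_mem x0 hx0mem ?_, hterm]
      · exact one_le_pow₀ hfone
      · intro x hx hne
        have hex : ∃ i : Fin (K+1), x i.castSucc ≠ 0 := by
          by_contra hcon
          push_neg at hcon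
          apply hne
          funext i
          refine Fin.lastCases ?_ ?_ i
          · have hsx : (∑ i : Fin (K+1), x i.castSucc) + x (Fin.last (K+1)) = n := by
              rw [← Fin.sum_univ_castSucc]; exact mem_multSupport.mp hx
            have : ∑ i : Fin (K+1), x i.castSucc = 0 :=
              Finset.sum_eq_zero fun i _ => hcon i
            have hxl : x (Fin.last (K+1)) = n := by omega
            simp [hx0def, hxl]
          · intro j
            simp [hx0def, hcon j]
        obtain ⟨i, hi⟩ := hex
        have hz : multPMF n p x = 0 := by
          unfold multPMF
          apply mul_eq_zero_of_right
          exact Finset.prod_eq_zero (Finset.mem_univ i.castSucc)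
            (by rw [hrest i, zero_pow hi])
        rw [hz, zero_mul]
    · -- q < 1
      have h1q : (0:ℝ) < 1 - q := by linarith
      set p' : Fin (K+1) → ℝ := fun i => p i.castSucc / (1 - q) with hp'def
      have hp'0 : ∀ i, 0 ≤ p' i := fun i => div_nonneg (hp _) (le_of_lt h1q)
      have hp'1 : ∑ i, p' i = 1 := by
        rw [hp'def, ← Finset.sum_div]
        have : ∑ i : Fin (K+1), p i.castSucc = 1 - q := by linarith
        rw [this, div_self (ne_of_gt h1q)]
      rw [sum_multSupport_succ]
      have hpt : ∀ m ∈ Finset.range (n+1), ∀ y ∈ multSupport (n-m) (K+1),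
          multPMF n p (Fin.snoc y m) *
            Real.exp (t * klVec (fun i => (((Fin.snoc y m : Fin (K+2) → ℕ) i : ℕ) : ℝ)/n) p)
          = binomPMF n q m * Real.exp (t * klBin ((m:ℝ)/n) q) *
            (multPMF (n-m) p' y *
              Real.exp ((t * ((n-m:ℕ):ℝ)/n) *
                klVec (fun i => (y i : ℝ)/((n-m:ℕ):ℝ)) p')) := by
        intro m hm y hy
        rw [Finset.mem_range] at hm
        have hmn : m ≤ n := by omega
        rw [mem_multSupport] at hy
        rw [multPMF_factor n m hmn p (ne_of_lt hq) y hy]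
        by_cases hgood : ∀ i : Fin (K+1), p i.castSucc = 0 → y i = 0
        · rw [kl_decomp n m hmn (by omega) p hp hq y hy hgood, mul_add, Real.exp_add,
            ← hqdef, ← hp'def]
          ring_nf
          simp only [mul_comm (((n - m : ℕ) : ℝ))⁻¹]
        · push_neg at hgood
          obtain ⟨i, hpi, hyi⟩ := hgood
          have hz : multPMF (n-m) p' y = 0 := by
            unfold multPMF
            apply mul_eq_zero_of_right
            refine Finset.prod_eq_zero (Finset.mem_univ i) ?_
            rw [hp'def]
            dsimp only
            rw [hpi, zero_div, zero_pow hyi]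
          rw [hz]
          ring
      rw [Finset.sum_congr rfl (fun m hm => Finset.sum_congr rfl (fun y hy => hpt m hm y hy))]
      have hinner : ∀ m ∈ Finset.range (n+1),
          ∑ y ∈ multSupport (n-m) (K+1),
            multPMF (n-m) p' y *
              Real.exp ((t * ((n-m:ℕ):ℝ)/n) * klVec (fun i => (y i : ℝ)/((n-m:ℕ):ℝ)) p')
          ≤ f (t/n) ^ K := by
        intro m hm
        rw [Finset.mem_range] at hm
        rcases eq_or_lt_of_le (Nat.lt_succ_iff.mp hm) with hmn | hmn
        · -- m = n : inner sum is 1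
          rw [hmn, Nat.sub_self, multSupport_zero, Finset.sum_singleton]
          have h1 : multPMF 0 p' (fun _ => 0) = 1 := by
            unfold multPMF
            simp
          have h2 : klVec (fun _ : Fin (K+1) => ((0:ℕ):ℝ)/((0:ℕ):ℝ)) p' = 0 := by
            unfold klVec
            simp
          rw [h1, h2, mul_zero, Real.exp_zero, mul_one]
          exact one_le_pow₀ hfone
        · -- m < n : apply ih
          have hR : (0:ℝ) < ((n-m:ℕ):ℝ) := by
            have : 0 < n - m := by omega
            exact_mod_cast this
          set t' : ℝ := t * ((n-m:ℕ):ℝ)/n with ht'def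
          have ht'0 : 0 ≤ t' := by positivity
          have ht'n : t' < ((n-m:ℕ):ℝ) := by
            have htn1 : t/n < 1 := (div_lt_one hnR).mpr htn
            have : t' = ((n-m:ℕ):ℝ) * (t/n) := by rw [ht'def]; ring
            rw [this]
            calc ((n-m:ℕ):ℝ) * (t/n) < ((n-m:ℕ):ℝ) * 1 := by
                  exact mul_lt_mul_of_pos_left htn1 hR
              _ = ((n-m:ℕ):ℝ) := mul_one _
          have hdiv : t' / ((n-m:ℕ):ℝ) = t/n := by
            rw [ht'def]
            field_simp
          have := ih (n-m) p' hp'0 hp'1 t' ht'0 ht'n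
          rw [hdiv] at this
          exact this
      calc ∑ m ∈ Finset.range (n+1), ∑ y ∈ multSupport (n-m) (K+1),
            binomPMF n q m * Real.exp (t * klBin ((m:ℝ)/n) q) *
              (multPMF (n-m) p' y *
                Real.exp ((t * ((n-m:ℕ):ℝ)/n) * klVec (fun i => (y i : ℝ)/((n-m:ℕ):ℝ)) p'))
          = ∑ m ∈ Finset.range (n+1),
              binomPMF n q m * Real.exp (t * klBin ((m:ℝ)/n) q) *
                ∑ y ∈ multSupport (n-m) (K+1),
                  multPMF (n-m) p' y *
                    Real.exp ((t * ((n-m:ℕ):ℝ)/n) * klVec (fun i => (y i : ℝ)/((n-m:ℕ):ℝ)) p') := by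
            exact Finset.sum_congr rfl fun m _ => (Finset.mul_sum _ _ _).symm
        _ ≤ ∑ m ∈ Finset.range (n+1),
              binomPMF n q m * Real.exp (t * klBin ((m:ℝ)/n) q) * f (t/n) ^ K := by
            refine Finset.sum_le_sum fun m hm => ?_
            exact mul_le_mul_of_nonneg_left (hinner m hm)
              (mul_nonneg (binomPMF_nonneg hq0 hq1 m) (le_of_lt (Real.exp_pos _)))
        _ = (∑ m ∈ Finset.range (n+1),
              binomPMF n q m * Real.exp (t * klBin ((m:ℝ)/n) q)) * f (t/n) ^ K := by
            rw [Finset.sum_mul]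
        _ ≤ f (t/n) * f (t/n) ^ K := by
            refine mul_le_mul_of_nonneg_right ?_ (pow_nonneg (by linarith) K)
            exact hf n hn1 t ht0 htn q hq0 hq1
        _ = f (t/n) ^ (K+1) := by rw [pow_succ]; ring

theorem multinomial_from_binomial_mgf_bound (f : ℝ → ℝ)
    (hf : ∀ m : ℕ, 1 ≤ m → ∀ t : ℝ, 0 ≤ t → t < m → ∀ p : ℝ, 0 ≤ p → p ≤ 1 →
      ∑ i ∈ Finset.range (m + 1), binomPMF m p i *
        Real.exp (t * klBin ((i : ℝ) / m) p) ≤ f (t / m))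
    (k n : ℕ) (hk : 2 ≤ k) (hn : 1 ≤ n)
    (p : Fin k → ℝ) (hp : ∀ i, 0 ≤ p i) (hp1 : ∑ i, p i = 1)
    (t : ℝ) (ht0 : 0 ≤ t) (htn : t < n) :
    ∑ x ∈ multSupport n k, multPMF n p x *
      Real.exp (t * klVec (fun i => (x i : ℝ) / n) p) ≤ f (t / n) ^ (k - 1) := by
  obtain ⟨K, rfl⟩ : ∃ K, k = K + 2 := ⟨k - 2, by omega⟩
  have h : K + 2 - 1 = K + 1 := rfl
  rw [h]
  exact aux_mgf f hf (K+1) n p hp hp1 t ht0 htn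
end
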